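/- Assume m is even. Then the lowest eigenvalue of the operator S on Λ(V) is −m, and the corresponding eigenspace is one-dimensional, spanned by 1 ∈ Λ^0(V). Precisely: S(1) = −m·1; for every real number λ and every nonzero x ∈ Λ(V) with S(x) = λ·x one has λ ≥ −m; and the eigenspace {x ∈ Λ(V) : S(x) = −m·x} equals the one-dimensional subspace ℝ·1. (Proposition 5.12 of the paper.) -/

import Mathlib

set_option synthInstance.maxHeartbeats 1000000
set_option maxHeartbeats 1000000

noncomputable section

open ExteriorAlgebra RealInnerProductSpace

/-- `V m` is the Euclidean space `ℝ^m`. -/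
abbrev Vm (m : ℕ) := EuclideanSpace ℝ (Fin m)

/-- `Λ(V)`, the exterior algebra of `ℝ^m` over `ℝ`. -/
abbrev ExtAlg (m : ℕ) := ExteriorAlgebra ℝ (Vm m)

/-- the standard orthonormal basis vectors `e_i` of `ℝ^m`. -/
def stdB (m : ℕ) (i : Fin m) : Vm m := EuclideanSpace.single i (1 : ℝ)

/-- left exterior multiplication `e ∧ ·` on `Λ(V)`. -/
def wedgeL {m : ℕ} (e : Vm m) : Module.End ℝ (ExtAlg m) :=
  LinearMap.mulLeft ℝ (ExteriorAlgebra.ι ℝ e)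

/-- interior multiplication (contraction) `ι_e` on `Λ(V)`, i.e. the odd derivation
contracting with the linear functional `⟪e, ·⟫`. -/
def interL {m : ℕ} (e : Vm m) : Module.End ℝ (ExtAlg m) :=
  CliffordAlgebra.contractLeft (Q := (0 : QuadraticForm ℝ (Vm m))) (innerSL ℝ e).toLinearMap

/-- `c(e) = e∧ − ι_e`. -/
def cC {m : ℕ} (e : Vm m) : Module.End ℝ (ExtAlg m) := wedgeL e - interL e

/-- `ĉ(e) = e∧ + ι_e`. -/
def cH {m : ℕ} (e : Vm m) : Module.End ℝ (ExtAlg m) := wedgeL e + interL e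

/-- the parity (grade) involution `σ`, acting as `(−1)^p` on `Λ^p(V)`. -/
def σP (m : ℕ) : Module.End ℝ (ExtAlg m) :=
  (CliffordAlgebra.involute (Q := (0 : QuadraticForm ℝ (Vm m)))).toLinearMap

/-- `c̃(e) = ĉ(e) ∘ σ`. -/
def cT {m : ℕ} (e : Vm m) : Module.End ℝ (ExtAlg m) := cH e ∘ₗ σP m

/-- `S = Σᵢ c(eᵢ) ∘ c̃(eᵢ)`. -/
def Sop (m : ℕ) : Module.End ℝ (ExtAlg m) := ∑ i : Fin m, cC (stdB m i) ∘ₗ cT (stdB m i)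

/-- `τ = c(e_1)∘⋯∘c(e_m)`. -/
def τP (m : ℕ) : Module.End ℝ (ExtAlg m) := (List.ofFn fun i : Fin m => cC (stdB m i)).prod

/-- `τ^* = σ ∘ τ`. -/
def τS (m : ℕ) : Module.End ℝ (ExtAlg m) := σP m ∘ₗ τP m

namespace Prop512

variable {m : ℕ}

lemma interL_mul (e v : Vm m) (x : ExtAlg m) :
    interL e (ι ℝ v * x) = (⟪e, v⟫ : ℝ) • x - ι ℝ v * interL e x := by
  simpa [interL] using CliffordAlgebra.contractLeft_ι_mul
    (Q := (0 : QuadraticForm ℝ (Vm m))) ((innerSL ℝ e).toLinearMap) v x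

lemma inner_stdB (i : Fin m) (v : Vm m) : (⟪stdB m i, v⟫ : ℝ) = v i := by
  simp [stdB, EuclideanSpace.inner_single_left]

lemma sum_smul_stdB (v : Vm m) : ∑ i, (v i) • stdB m i = v := by
  have := Module.Basis.sum_repr (EuclideanSpace.basisFun (Fin m) ℝ).toBasis v
  simp only [EuclideanSpace.basisFun_repr, OrthonormalBasis.coe_toBasis,
    EuclideanSpace.basisFun_apply] at this
  simpa [stdB] using this

lemma inner_stdB_self (i : Fin m) : (⟪stdB m i, stdB m i⟫ : ℝ) = 1 := by
  rw [inner_stdB]; simp [stdB, EuclideanSpace.single_apply]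

lemma ι_anticomm (a b : Vm m) : ι ℝ a * ι ℝ b = -(ι ℝ b * ι ℝ a) :=
  eq_neg_of_add_eq_zero_left (ι_add_mul_swap a b)

/-- the number operator -/
def Nop (m : ℕ) : Module.End ℝ (ExtAlg m) := ∑ i : Fin m, wedgeL (stdB m i) ∘ₗ interL (stdB m i)

lemma Nop_apply (x : ExtAlg m) :
    Nop m x = ∑ i : Fin m, ι ℝ (stdB m i) * interL (stdB m i) x := by
  simp [Nop, wedgeL, LinearMap.sum_apply]

lemma Nop_mem {p : ℕ} {x : ExtAlg m} (hx : x ∈ ⋀[ℝ]^p (Vm m)) :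
    Nop m x = (p : ℝ) • x := by
  induction hx using Submodule.pow_induction_on_left' with
  | algebraMap r =>
      simp [Nop_apply, interL, CliffordAlgebra.contractLeft_algebraMap]
  | add x y i hx hy ihx ihy =>
      simp only [map_add, ihx, ihy, smul_add]
  | mem_mul v hv n x hx ih =>
      obtain ⟨w, rfl⟩ := hv
      have hw : ∑ i : Fin m, (⟪stdB m i, w⟫ : ℝ) • stdB m i = w := by
        simp_rw [inner_stdB]; exact sum_smul_stdB w
      rw [Nop_apply]
      have expand : ∀ i : Fin m, ι ℝ (stdB m i) * interL (stdB m i) (ι ℝ w * x)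
          = (⟪stdB m i, w⟫ : ℝ) • (ι ℝ (stdB m i) * x)
            + ι ℝ w * (ι ℝ (stdB m i) * interL (stdB m i) x) := by
        intro i
        rw [interL_mul, mul_sub, mul_smul_comm, ← mul_assoc,
          ι_anticomm (stdB m i) w, neg_mul, mul_assoc, sub_neg_eq_add]
      rw [Finset.sum_congr rfl fun i _ => expand i, Finset.sum_add_distrib]
      have h1 : ∑ i : Fin m, (⟪stdB m i, w⟫ : ℝ) • (ι ℝ (stdB m i) * x) = ι ℝ w * x := by
        calc ∑ i : Fin m, (⟪stdB m i, w⟫ : ℝ) • (ι ℝ (stdB m i) * x)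
            = (∑ i : Fin m, ι ℝ ((⟪stdB m i, w⟫ : ℝ) • stdB m i)) * x := by
              rw [Finset.sum_mul]
              exact Finset.sum_congr rfl fun i _ => by rw [map_smul, smul_mul_assoc]
          _ = ι ℝ w * x := by rw [← map_sum, hw]
      have h2 : ∑ i : Fin m, ι ℝ w * (ι ℝ (stdB m i) * interL (stdB m i) x)
          = (n : ℝ) • (ι ℝ w * x) := by
        rw [← Finset.mul_sum, ← Nop_apply, ih, mul_smul_comm]
      rw [h1, h2]
      push_cast
      rw [add_smul, one_smul, add_comm]

lemma σP_mem {p : ℕ} {x : ExtAlg m} (hx : x ∈ ⋀[ℝ]^p (Vm m)) :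
    σP m x = ((-1 : ℝ)^p) • x := by
  induction hx using Submodule.pow_induction_on_left' with
  | algebraMap r => simp [σP]
  | add x y i hx hy ihx ihy => simp only [map_add, ihx, ihy, smul_add]
  | mem_mul v hv n x hx ih =>
      obtain ⟨w, rfl⟩ := hv
      have h : σP m (ι ℝ w * x) = (-(ι ℝ w)) * σP m x := by
        simp only [σP, AlgHom.toLinearMap_apply, map_mul]
        congr 1
        exact CliffordAlgebra.involute_ι _
      rw [h, ih, mul_smul_comm, neg_mul, smul_neg, ← neg_smul, pow_succ]
      congr 1
      ring

/-- the eigenvalue of `S` on `Λ^p`. -/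
def lamP (m p : ℕ) : ℝ := (-1)^p * (2*p - m)

lemma Sop_mem {p : ℕ} {x : ExtAlg m} (hx : x ∈ ⋀[ℝ]^p (Vm m)) :
    Sop m x = lamP m p • x := by
  have hS : ∀ y : ExtAlg m, Sop m y
      = (2 : ℝ) • Nop m (σP m y) - (m : ℝ) • σP m y := by
    intro y
    have term : ∀ i : Fin m, cC (stdB m i) (cH (stdB m i) (σP m y))
        = 2 • (ι ℝ (stdB m i) * interL (stdB m i) (σP m y)) - σP m y := by
      intro i
      set z := σP m y
      have e1 : ι ℝ (stdB m i) * (ι ℝ (stdB m i) * z) = 0 := by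
        rw [← mul_assoc, ι_sq_zero, zero_mul]
      have e2 : interL (stdB m i) (interL (stdB m i) z) = 0 := by
        simp [interL, CliffordAlgebra.contractLeft_contractLeft]
      have e3 : interL (stdB m i) (ι ℝ (stdB m i) * z)
          = z - ι ℝ (stdB m i) * interL (stdB m i) z := by
        rw [interL_mul, inner_stdB_self, one_smul]
      simp only [cC, cH, wedgeL, LinearMap.sub_apply, LinearMap.add_apply, map_add,
        LinearMap.mulLeft_apply, e1, e2, e3]
      abel
    calc Sop m y = ∑ i : Fin m, cC (stdB m i) (cH (stdB m i) (σP m y)) := by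
          simp [Sop, LinearMap.sum_apply, LinearMap.comp_apply, cT]
      _ = ∑ i : Fin m, (2 • (ι ℝ (stdB m i) * interL (stdB m i) (σP m y)) - σP m y) :=
          Finset.sum_congr rfl fun i _ => term i
      _ = 2 • Nop m (σP m y) - (m : ℝ) • σP m y := by
          rw [Finset.sum_sub_distrib, Finset.sum_const, ← Finset.smul_sum, ← Nop_apply,
            Finset.card_univ, Fintype.card_fin]
          congr 1
      _ = (2 : ℝ) • Nop m (σP m y) - (m : ℝ) • σP m y := by
          rw [← Nat.cast_smul_eq_nsmul ℝ (2 : ℕ)]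
          norm_num
  rw [hS x, σP_mem hx, map_smul, Nop_mem hx]
  simp only [smul_smul]
  rw [← sub_smul, lamP]
  congr 1
  ring

lemma power_bot {p : ℕ} (hp : m < p) : ⋀[ℝ]^p (Vm m) = ⊥ := by
  rw [← ιMulti_span_fixedDegree, Submodule.span_eq_bot]
  rintro _ ⟨v, rfl⟩
  apply AlternatingMap.map_linearDependent
  intro hlin
  have := hlin.fintype_card_le_finrank
  simp [finrank_euclideanSpace_fin] at this
  omega

lemma lamP_ge {p : ℕ} (hp : p ≤ m) : -(m:ℝ) ≤ lamP m p := by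
  rcases Nat.even_or_odd p with he | ho
  · rw [lamP, he.neg_one_pow, one_mul]
    have : (0:ℝ) ≤ p := Nat.cast_nonneg p
    linarith
  · rw [lamP, ho.neg_one_pow, neg_one_mul]
    have : (p:ℝ) ≤ m := Nat.cast_le.mpr hp
    linarith

lemma lamP_ne (hme : Even m) {p : ℕ} (hp0 : p ≠ 0) : lamP m p ≠ -(m:ℝ) := by
  rcases Nat.even_or_odd p with he | ho
  · rw [lamP, he.neg_one_pow, one_mul]
    have hp' : (0:ℝ) < p := by exact_mod_cast Nat.pos_of_ne_zero hp0
    intro h; linarith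
  · rw [lamP, ho.neg_one_pow, neg_one_mul]
    intro h
    have h1 : (p:ℝ) = m := by linarith
    have h2 : p = m := by exact_mod_cast h1
    exact (Nat.not_odd_iff_even.mpr hme) (h2 ▸ ho)

lemma decompose_Sop (x : ExtAlg m) (p : ℕ) :
    (DirectSum.decompose (fun i : ℕ => ⋀[ℝ]^i (Vm m)) (Sop m x) p : ExtAlg m)
      = lamP m p • (DirectSum.decompose (fun i : ℕ => ⋀[ℝ]^i (Vm m)) x p : ExtAlg m) := by
  classical
  set 𝒜 : ℕ → Submodule ℝ (ExtAlg m) := fun i : ℕ => ⋀[ℝ]^i (Vm m) with h𝒜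
  have hx := DirectSum.sum_support_decompose 𝒜 x
  have step1 : Sop m x = ∑ q ∈ (DirectSum.decompose 𝒜 x).support,
      lamP m q • (DirectSum.decompose 𝒜 x q : ExtAlg m) := by
    conv_lhs => rw [← hx]
    rw [map_sum]
    exact Finset.sum_congr rfl fun q _ => Sop_mem (SetLike.coe_mem _)
  have term : ∀ q, (DirectSum.decompose 𝒜
        (lamP m q • (DirectSum.decompose 𝒜 x q : ExtAlg m)) p : ExtAlg m)
      = if p = q then lamP m q • (DirectSum.decompose 𝒜 x q : ExtAlg m) else 0 := by
    intro q
    have hq : lamP m q • (DirectSum.decompose 𝒜 x q : ExtAlg m) ∈ 𝒜 q :=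
      Submodule.smul_mem _ _ (SetLike.coe_mem _)
    split_ifs with h
    · subst h; exact DirectSum.decompose_of_mem_same 𝒜 hq
    · exact DirectSum.decompose_of_mem_ne 𝒜 hq (Ne.symm h)
  rw [step1, DirectSum.decompose_sum, DFinsupp.finset_sum_apply,
    AddSubmonoidClass.coe_finset_sum]
  rw [Finset.sum_congr rfl fun q _ => term q, Finset.sum_ite_eq]
  split_ifs with h
  · rfl
  · rw [DFinsupp.notMem_support_iff.mp h]
    simp

lemma decompose_component_eq (x : ExtAlg m) (lam : ℝ) (hx : Sop m x = lam • x) (p : ℕ) :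
    lamP m p • (DirectSum.decompose (fun i : ℕ => ⋀[ℝ]^i (Vm m)) x p : ExtAlg m)
      = lam • (DirectSum.decompose (fun i : ℕ => ⋀[ℝ]^i (Vm m)) x p : ExtAlg m) := by
  have h1 := decompose_Sop x p
  rw [hx, DirectSum.decompose_smul] at h1
  simpa [DirectSum.smul_apply] using h1.symm

end Prop512

open Prop512 in
/-- Proposition 5.12: for `m` even, the lowest eigenvalue of `S` on `Λ(V)` is `−m`,
with one-dimensional eigenspace spanned by `1 ∈ Λ^0(V)`. -/
theorem Sop_lowest_eigenvalue (m : ℕ) (hm : 0 < m) (hme : Even m) :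
    Sop m (1 : ExtAlg m) = (-(m : ℝ)) • (1 : ExtAlg m) ∧
    (∀ (lam : ℝ) (x : ExtAlg m), x ≠ 0 → Sop m x = lam • x → -(m : ℝ) ≤ lam) ∧
    (∀ x : ExtAlg m, Sop m x = (-(m : ℝ)) • x ↔ ∃ c : ℝ, x = c • (1 : ExtAlg m)) := by
  classical
  have hone : (1 : ExtAlg m) ∈ ⋀[ℝ]^0 (Vm m) := by
    have h0 : (⋀[ℝ]^0 (Vm m) : Submodule ℝ (ExtAlg m)) = 1 := pow_zero _
    rw [h0]
    exact Submodule.mem_one.mpr ⟨1, map_one _⟩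
  have hS1 : Sop m (1 : ExtAlg m) = (-(m : ℝ)) • (1 : ExtAlg m) := by
    rw [Sop_mem hone]
    congr 1
    simp [lamP]
  refine ⟨hS1, ?_, ?_⟩
  · intro lam x hx0 hSx
    have key := decompose_component_eq x lam hSx
    have hex : ∃ p, (DirectSum.decompose (fun i : ℕ => ⋀[ℝ]^i (Vm m)) x p : ExtAlg m) ≠ 0 := by
      by_contra h
      push_neg at h
      apply hx0
      rw [← DirectSum.sum_support_decompose (fun i : ℕ => ⋀[ℝ]^i (Vm m)) x]
      exact Finset.sum_eq_zero fun q _ => h q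
    obtain ⟨p, hp⟩ := hex
    have hpm : p ≤ m := by
      by_contra h
      push_neg at h
      apply hp
      exact (Submodule.eq_bot_iff _).mp (power_bot h) _ (SetLike.coe_mem _)
    have heq : lamP m p = lam := by
      have hk := key p
      have hsub : (lamP m p - lam) •
          (DirectSum.decompose (fun i : ℕ => ⋀[ℝ]^i (Vm m)) x p : ExtAlg m) = 0 := by
        rw [sub_smul, hk, sub_self]
      rcases smul_eq_zero.mp hsub with h | h
      · exact sub_eq_zero.mp h
      · exact absurd h hp
    rw [← heq]
    exact lamP_ge hpm
  · intro x
    constructor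
    · intro hSx
      have key := decompose_component_eq x (-(m:ℝ)) hSx
      have hzero : ∀ p, p ≠ 0 →
          (DirectSum.decompose (fun i : ℕ => ⋀[ℝ]^i (Vm m)) x p : ExtAlg m) = 0 := by
        intro p hp0
        rcases le_or_gt p m with hpm | hpm
        · have hk := key p
          have hsub : (lamP m p - (-(m:ℝ))) •
              (DirectSum.decompose (fun i : ℕ => ⋀[ℝ]^i (Vm m)) x p : ExtAlg m) = 0 := by
            rw [sub_smul, hk, sub_self]
          rcases smul_eq_zero.mp hsub with h | h
          · exact absurd (sub_eq_zero.mp h) (lamP_ne hme hp0)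
          · exact h
        · exact (Submodule.eq_bot_iff _).mp (power_bot hpm) _ (SetLike.coe_mem _)
      have hx0' : x = (DirectSum.decompose (fun i : ℕ => ⋀[ℝ]^i (Vm m)) x 0 : ExtAlg m) := by
        have hsub : (DirectSum.decompose (fun i : ℕ => ⋀[ℝ]^i (Vm m)) x).support
            ⊆ {0} := by
          intro q hq
          rw [Finset.mem_singleton]
          by_contra hq0
          exact (DFinsupp.mem_support_iff.mp hq)
            (ZeroMemClass.coe_eq_zero.mp (hzero q hq0))
        calc x = ∑ q ∈ (DirectSum.decompose (fun i : ℕ => ⋀[ℝ]^i (Vm m)) x).support,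
              (DirectSum.decompose (fun i : ℕ => ⋀[ℝ]^i (Vm m)) x q : ExtAlg m) :=
              (DirectSum.sum_support_decompose _ x).symm
          _ = ∑ q ∈ ({0} : Finset ℕ),
              (DirectSum.decompose (fun i : ℕ => ⋀[ℝ]^i (Vm m)) x q : ExtAlg m) := by
              refine Finset.sum_subset hsub fun q _ hq => ?_
              rw [DFinsupp.notMem_support_iff.mp hq]
              rfl
          _ = (DirectSum.decompose (fun i : ℕ => ⋀[ℝ]^i (Vm m)) x 0 : ExtAlg m) :=
              Finset.sum_singleton _ _
      have hmem0 : (DirectSum.decompose (fun i : ℕ => ⋀[ℝ]^i (Vm m)) x 0 : ExtAlg m)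
          ∈ (1 : Submodule ℝ (ExtAlg m)) := by
        have h0 : (⋀[ℝ]^0 (Vm m) : Submodule ℝ (ExtAlg m)) = 1 := pow_zero _
        rw [← h0]
        exact SetLike.coe_mem _
      obtain ⟨c, hc⟩ := Submodule.mem_one.mp hmem0
      refine ⟨c, ?_⟩
      rw [hx0', ← hc, Algebra.algebraMap_eq_smul_one]
    · rintro ⟨c, rfl⟩
      rw [map_smul, hS1, smul_comm]
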